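/- Let ℓ ∈ ℕ and m ∈ ℤ with |m| ≤ ℓ, and set h_{a,b} := √((a+b)(a−b)) for integers a,b with (a+b)(a−b) ≥ 0. Then for all y ∈ (−1,1) and φ ∈ ℝ: y·Y_{ℓ,m}(y,φ) = (1/(2ℓ+1))·(h_{ℓ+1,m}·Y_{ℓ+1,m}(y,φ) + h_{ℓ,m}·Y_{ℓ−1,m}(y,φ)), where Y_{ℓ−1,m} := 0 when |m| > ℓ−1 (note h_{ℓ,m} = 0 when |m| = ℓ). -/

import Mathlib

open Polynomial

noncomputable def uP (n : ℕ) : ℝ[X] := (X ^ 2 - 1) ^ n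

lemma iter_add (k : ℕ) (p q : ℝ[X]) :
    derivative^[k] (p + q) = derivative^[k] p + derivative^[k] q := by
  simp_rw [← Module.End.pow_apply, map_add]

-- Leibniz for X * p, successor version
lemma iter_X_mul (k : ℕ) (p : ℝ[X]) :
    derivative^[k+1] (X * p) = X * derivative^[k+1] p + C ((k:ℝ)+1) * derivative^[k] p := by
  induction k generalizing p with
  | zero => simp [derivative_mul]; ring
  | succ k ih =>
      rw [Function.iterate_succ_apply' derivative (k+1) (X*p), ih,
        derivative_add, derivative_mul, derivative_X, derivative_C_mul,
        ← Function.iterate_succ_apply' derivative (k+1) p,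
        ← Function.iterate_succ_apply' derivative k p]
      simp only [Nat.succ_eq_add_one, Nat.cast_add, Nat.cast_one, map_add, map_one]
      ring

lemma deriv_u_succ (n : ℕ) : derivative (uP (n+1)) = C (2*((n:ℝ)+1)) * (X * uP n) := by
  unfold uP
  rw [derivative_pow_succ]
  simp only [derivative_X_pow, derivative_sub, derivative_one, sub_zero, map_mul, map_add,
    map_one, map_ofNat, Nat.cast_add, Nat.cast_one, Nat.cast_ofNat, pow_one]
  ring

lemma X_mul_deriv_u (n : ℕ) :
    X * derivative (uP (n+1)) = C (2*((n:ℝ)+1)) * (uP (n+1) + uP n) := by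
  rw [deriv_u_succ]
  have h : (X:ℝ[X]) * (X * uP n) = uP (n+1) + uP n := by
    unfold uP; ring
  rw [mul_left_comm, h]

-- E(n,k): X * D^[k+1] u_{n+1} = (2(n+1)-k) • D^k u_{n+1} + 2(n+1) • D^k u_n
lemma lemE (n k : ℕ) :
    X * derivative^[k+1] (uP (n+1))
      = C (2*((n:ℝ)+1)-k) * derivative^[k] (uP (n+1))
        + C (2*((n:ℝ)+1)) * derivative^[k] (uP n) := by
  cases k with
  | zero =>
      simp only [zero_add, Function.iterate_one, Function.iterate_zero, id_eq, Nat.cast_zero, sub_zero]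
      rw [X_mul_deriv_u n]
      ring
  | succ k =>
      have h := congrArg (derivative^[k+1]) (X_mul_deriv_u n)
      rw [iter_X_mul (k) (derivative (uP (n+1)))] at h
      rw [iterate_derivative_C_mul, iter_add] at h
      rw [← Function.iterate_succ_apply derivative k (uP (n+1))] at h
      rw [← Function.iterate_succ_apply derivative (k+1) (uP (n+1))] at h
      have h2 : X * derivative^[k+1+1] (uP (n+1))
          = C (2*((n:ℝ)+1)) * (derivative^[k+1] (uP (n+1)) + derivative^[k+1] (uP n))
            - C ((k:ℝ)+1) * derivative^[k+1] (uP (n+1)) := by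
        rw [← h]; ring
      rw [h2]
      push_cast
      simp only [map_add, map_mul, map_sub, map_one, map_ofNat, map_natCast]
      ring

-- B(n,0)
lemma lemB0 (n : ℕ) :
    derivative^[2] (uP (n+2))
      = C (4*((n:ℝ)+1)*((n:ℝ)+2)) * uP n + C (2*((n:ℝ)+2)*(2*(n:ℝ)+3)) * uP (n+1) := by
  have h1 : derivative^[2] (uP (n+2)) = derivative (derivative (uP (n+2))) := rfl
  rw [h1, deriv_u_succ (n+1)]
  rw [derivative_C_mul, derivative_mul, derivative_X, deriv_u_succ n]
  unfold uP
  push_cast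
  simp only [map_add, map_mul, map_sub, map_one, map_ofNat, map_natCast]
  ring

lemma lemB (n k : ℕ) :
    derivative^[k+2] (uP (n+2))
      = C (4*((n:ℝ)+1)*((n:ℝ)+2)) * derivative^[k] (uP n)
        + C (2*((n:ℝ)+2)*(2*(n:ℝ)+3)) * derivative^[k] (uP (n+1)) := by
  have h := congrArg (derivative^[k]) (lemB0 n)
  rw [iter_add, iterate_derivative_C_mul, iterate_derivative_C_mul,
    ← Function.iterate_add_apply derivative k 2] at h
  simpa [Nat.add_comm] using h

lemma lemG (n m : ℕ) :
    C ((2*((n:ℝ)+1)+1) * (2*((n:ℝ)+2))) * (X * derivative^[n+1+m] (uP (n+1)))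
      = C (((n:ℝ)+2)-m) * derivative^[n+m+2] (uP (n+2))
        + C ((((n:ℝ)+1)+m) * (4*((n:ℝ)+1)*((n:ℝ)+2))) * derivative^[n+m] (uP n) := by
  induction m with
  | zero =>
      have hd : derivative^[n+0+2] (uP (n+2)) = derivative^[n+1] (derivative (uP (n+2))) := by
        rw [show n+0+2 = n+1+1 from by omega]
        exact Function.iterate_succ_apply derivative (n+1) (uP (n+2))
      rw [hd, deriv_u_succ (n+1), iterate_derivative_C_mul, iter_X_mul n (uP (n+1))]
      have hE := lemE n n
      have h0 : n + 1 + 0 = n + 1 := rfl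
      rw [h0, hE]
      have h00 : n + 0 = n := rfl
      rw [h00]
      push_cast
      simp only [map_add, map_mul, map_sub, map_one, map_ofNat, map_natCast, map_zero]
      ring
  | succ m ih =>
      have h := congrArg derivative ih
      rw [derivative_C_mul, derivative_add, derivative_C_mul, derivative_C_mul,
        derivative_mul, derivative_X, one_mul,
        ← Function.iterate_succ_apply' derivative (n+1+m) (uP (n+1)),
        ← Function.iterate_succ_apply' derivative (n+m+2) (uP (n+2)),
        ← Function.iterate_succ_apply' derivative (n+m) (uP n)] at h
      have hB := lemB n (n+m+1)
      rw [show n+(m+1)+2 = n+m+2+1 by omega, show n+(m+1) = n+m+1 by omega,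
        show n+1+(m+1) = n+m+1+1 by omega]
      simp only [Nat.succ_eq_add_one, show n+1+m = n+m+1 by omega,
        show n+m+1+2 = n+m+2+1 by omega] at h hB
      push_cast
      simp only [map_add, map_mul, map_sub, map_one, map_ofNat, map_natCast] at h hB ⊢
      linear_combination h + hB

/-- Associated Legendre function
`P̂_ℓ^m(y) = (−1)^m·(1−y²)^{m/2}·(1/(2^ℓ·ℓ!))·(d/dy)^{ℓ+m}[(y²−1)^ℓ]`. -/
noncomputable def hatP (l m : ℕ) (y : ℝ) : ℝ :=
  (-1 : ℝ) ^ m * (1 - y ^ 2) ^ ((m : ℝ) / 2) * (1 / ((2 : ℝ) ^ l * (Nat.factorial l : ℝ))) *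
    Polynomial.eval y
      ((fun q : Polynomial ℝ => Polynomial.derivative q)^[l + m] ((X ^ 2 - 1) ^ l))

/-- Normalized associated Legendre function `Č_ℓ^m = √((ℓ−m)!/(ℓ+m)!)·P̂_ℓ^m`. -/
noncomputable def checkP (l m : ℕ) (y : ℝ) : ℝ :=
  Real.sqrt ((Nat.factorial (l - m) : ℝ) / (Nat.factorial (l + m) : ℝ)) * hatP l m y

/-- Real (tesseral) spherical harmonics `Y_{ℓ,m}(y,φ)`, defined to be `0` when
`ℓ < 0` or `|m| > ℓ`. -/
noncomputable def Ysh (l m : ℤ) (y φ : ℝ) : ℝ :=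
  if 0 ≤ l ∧ |m| ≤ l then
    if m < 0 then Real.sqrt 2 * checkP l.toNat m.natAbs y * Real.sin ((m.natAbs : ℝ) * φ)
    else if m = 0 then checkP l.toNat 0 y
    else Real.sqrt 2 * checkP l.toNat m.natAbs y * Real.cos ((m : ℝ) * φ)
  else 0

/-- `h_{a,b} = √((a+b)(a−b))`. -/
noncomputable def hC (a b : ℤ) : ℝ := Real.sqrt (((a + b) * (a - b) : ℤ) : ℝ)


lemma hatP_eq (l m : ℕ) (y : ℝ) : hatP l m y
    = (-1:ℝ)^m * (1-y^2)^((m:ℝ)/2) * (1/((2:ℝ)^l * (Nat.factorial l : ℝ)))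
      * Polynomial.eval y (derivative^[l+m] (uP l)) := rfl

lemma p_rec (n m : ℕ) (y : ℝ) :
    (2*((n:ℝ)+1)+1) * (y * ((1/((2:ℝ)^(n+1) * (Nat.factorial (n+1) : ℝ)))
        * Polynomial.eval y (derivative^[n+1+m] (uP (n+1)))))
      = ((n:ℝ)+2-(m:ℝ)) * ((1/((2:ℝ)^(n+2) * (Nat.factorial (n+2) : ℝ)))
          * Polynomial.eval y (derivative^[n+m+2] (uP (n+2))))
        + ((n:ℝ)+1+(m:ℝ)) * ((1/((2:ℝ)^n * (Nat.factorial n : ℝ)))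
            * Polynomial.eval y (derivative^[n+m] (uP n))) := by
  have hG := congrArg (Polynomial.eval y) (lemG n m)
  simp only [eval_mul, eval_add, eval_C, eval_X] at hG
  have h2 : ((2:ℝ))^n ≠ 0 := by positivity
  have hfp : (0:ℝ) < (Nat.factorial n : ℝ) := by exact_mod_cast Nat.factorial_pos n
  have hfp2 : (0:ℝ) < (Nat.factorial (n+2) : ℝ) := by exact_mod_cast Nat.factorial_pos (n+2)
  have hf : ((Nat.factorial n : ℝ)) ≠ 0 := ne_of_gt hfp
  have e1 : ((2:ℝ)^(n+2) * (Nat.factorial (n+2):ℝ))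
      * (1/((2:ℝ)^(n+1) * (Nat.factorial (n+1):ℝ))) = 2*((n:ℝ)+2) := by
    rw [Nat.factorial_succ (n+1), Nat.factorial_succ n]
    push_cast
    rw [pow_succ ((2:ℝ)) (n+1), pow_succ ((2:ℝ)) n]
    field_simp
    ring
  have e2 : ((2:ℝ)^(n+2) * (Nat.factorial (n+2):ℝ))
      * (1/((2:ℝ)^(n+2) * (Nat.factorial (n+2):ℝ))) = 1 := by
    have hx : ((2:ℝ)^(n+2) * (Nat.factorial (n+2):ℝ)) ≠ 0 := by positivity
    field_simp
  have e3 : ((2:ℝ)^(n+2) * (Nat.factorial (n+2):ℝ))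
      * (1/((2:ℝ)^n * (Nat.factorial n:ℝ))) = 4*((n:ℝ)+1)*((n:ℝ)+2) := by
    rw [Nat.factorial_succ (n+1), Nat.factorial_succ n]
    push_cast
    rw [pow_succ ((2:ℝ)) (n+1), pow_succ ((2:ℝ)) n]
    field_simp
    ring
  have hA : ((2:ℝ)^(n+2) * (Nat.factorial (n+2):ℝ)) ≠ 0 := by positivity
  apply mul_left_cancel₀ hA
  linear_combination hG
    + ((2*(n:ℝ)+3)*y*Polynomial.eval y (derivative^[n+1+m] (uP (n+1))))*e1
    - (((n:ℝ)+2-(m:ℝ))*Polynomial.eval y (derivative^[n+m+2] (uP (n+2))))*e2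
    - (((n:ℝ)+1+(m:ℝ))*Polynomial.eval y (derivative^[n+m] (uP n)))*e3

lemma hatP_rec (n m : ℕ) (y : ℝ) :
    (2*((n:ℝ)+1)+1) * (y * hatP (n+1) m y)
      = ((n:ℝ)+2-(m:ℝ)) * hatP (n+2) m y + ((n:ℝ)+1+(m:ℝ)) * hatP n m y := by
  have h := p_rec n m y
  rw [hatP_eq (n+1) m y, hatP_eq (n+2) m y, hatP_eq n m y,
    show n+2+m = n+m+2 by omega]
  linear_combination ((-1:ℝ)^m * (1-y^2)^((m:ℝ)/2)) * h

lemma helper1 (l m : ℕ) (hm : m ≤ l) :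
    hC ((l:ℤ)+1) (m:ℤ)
        * Real.sqrt ((Nat.factorial (l+1-m) : ℝ)/(Nat.factorial (l+1+m) : ℝ))
      = ((l:ℝ)+1-m)
        * Real.sqrt ((Nat.factorial (l-m) : ℝ)/(Nat.factorial (l+m) : ℝ)) := by
  have hm' : (m:ℝ) ≤ (l:ℝ) := by exact_mod_cast hm
  have h1 : (0:ℝ) ≤ (l:ℝ)+1-m := by linarith
  have h2 : (0:ℝ) ≤ ((l:ℝ)+1+m) * ((l:ℝ)+1-m) := by positivity
  unfold hC
  rw [show ((((l:ℤ)+1+m) * ((l:ℤ)+1-m) : ℤ) : ℝ) = ((l:ℝ)+1+m) * ((l:ℝ)+1-m) by push_cast; ring]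
  rw [← Real.sqrt_mul h2, ← Real.sqrt_sq h1, ← Real.sqrt_mul (sq_nonneg _)]
  congr 1
  have hfl : (Nat.factorial (l+1-m) : ℝ) = ((l:ℝ)+1-m) * (Nat.factorial (l-m) : ℝ) := by
    rw [show l+1-m = (l-m)+1 by omega, Nat.factorial_succ]
    push_cast [Nat.cast_sub hm]
    ring
  have hfu : (Nat.factorial (l+1+m) : ℝ) = ((l:ℝ)+1+m) * (Nat.factorial (l+m) : ℝ) := by
    rw [show l+1+m = (l+m)+1 by omega, Nat.factorial_succ]
    push_cast
    ring
  have hu : (Nat.factorial (l+m) : ℝ) ≠ 0 := by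
    exact_mod_cast Nat.factorial_ne_zero (l+m)
  have hup : ((l:ℝ)+1+m) ≠ 0 := by positivity
  rw [hfl, hfu, Real.sqrt_sq h1]
  field_simp

lemma helper2 (n m : ℕ) (hm : m ≤ n) :
    hC ((n:ℤ)+1) (m:ℤ)
        * Real.sqrt ((Nat.factorial (n-m) : ℝ)/(Nat.factorial (n+m) : ℝ))
      = ((n:ℝ)+1+m)
        * Real.sqrt ((Nat.factorial (n+1-m) : ℝ)/(Nat.factorial (n+1+m) : ℝ)) := by
  have hm' : (m:ℝ) ≤ (n:ℝ) := by exact_mod_cast hm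
  have h1 : (0:ℝ) ≤ (n:ℝ)+1+m := by positivity
  have h2 : (0:ℝ) ≤ ((n:ℝ)+1+m) * ((n:ℝ)+1-m) := by nlinarith
  unfold hC
  rw [show ((((n:ℤ)+1+m) * ((n:ℤ)+1-m) : ℤ) : ℝ) = ((n:ℝ)+1+m) * ((n:ℝ)+1-m) by push_cast; ring]
  rw [← Real.sqrt_mul h2, ← Real.sqrt_sq h1, ← Real.sqrt_mul (sq_nonneg _)]
  congr 1
  have hfl : (Nat.factorial (n+1-m) : ℝ) = ((n:ℝ)+1-m) * (Nat.factorial (n-m) : ℝ) := by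
    rw [show n+1-m = (n-m)+1 by omega, Nat.factorial_succ]
    push_cast [Nat.cast_sub hm]
    ring
  have hfu : (Nat.factorial (n+1+m) : ℝ) = ((n:ℝ)+1+m) * (Nat.factorial (n+m) : ℝ) := by
    rw [show n+1+m = (n+m)+1 by omega, Nat.factorial_succ]
    push_cast
    ring
  have hu : (Nat.factorial (n+m) : ℝ) ≠ 0 := by
    exact_mod_cast Nat.factorial_ne_zero (n+m)
  have hup : ((n:ℝ)+1+m) ≠ 0 := by positivity
  rw [hfl, hfu, Real.sqrt_sq h1]
  field_simp

lemma hatP_high (n m : ℕ) (h : 2*n < n+m) (y : ℝ) : hatP n m y = 0 := by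
  rw [hatP_eq]
  have hd : (uP n).natDegree ≤ 2*n := by
    unfold uP
    refine le_trans (natDegree_pow_le) ?_
    have h2 : (X^2 - 1 : ℝ[X]).natDegree ≤ 2 := by
      refine le_trans (natDegree_sub_le _ _) ?_
      simp [natDegree_X_pow]
    calc n * (X^2 - 1 : ℝ[X]).natDegree ≤ n * 2 := Nat.mul_le_mul_left n h2
      _ = 2*n := by ring
  rw [Polynomial.iterate_derivative_eq_zero (lt_of_le_of_lt hd h)]
  simp

lemma checkP00 (y : ℝ) : checkP 0 0 y = 1 := by
  unfold checkP
  rw [hatP_eq]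
  norm_num [uP, Real.rpow_zero]

lemma checkP10 (y : ℝ) : checkP 1 0 y = y := by
  unfold checkP
  rw [hatP_eq]
  norm_num [uP, Real.rpow_zero, Nat.factorial]
  ring

lemma checkP_rec (l m : ℕ) (hm : m ≤ l) (y : ℝ) :
    (2*(l:ℝ)+1) * (y * checkP l m y)
      = hC ((l:ℤ)+1) (m:ℤ) * checkP (l+1) m y
        + hC (l:ℤ) (m:ℤ) * (if m < l then checkP (l-1) m y else 0) := by
  cases l with
  | zero =>
      interval_cases m
      simp only [Nat.lt_irrefl, if_neg (lt_irrefl 0)]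
      rw [checkP00, checkP10]
      unfold hC
      norm_num
  | succ n =>
      by_cases hml : m < n + 1
      · have hmn : m ≤ n := by omega
        have hr := hatP_rec n m y
        have H1 := helper1 (n+1) m hm
        have H2 := helper2 n m hmn
        rw [if_pos hml]
        unfold checkP
        rw [show n+1-1 = n from rfl, show n+1+1 = n+2 from rfl]
        rw [show n+1+1-m = n+2-m from rfl, show n+1+1+m = n+2+m from rfl] at H1
        push_cast at H1 H2 ⊢
        linear_combination
          Real.sqrt ((Nat.factorial (n+1-m) : ℝ)/(Nat.factorial (n+1+m) : ℝ)) * hr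
          - hatP (n+2) m y * H1 - hatP n m y * H2
      · have hml' : m = n + 1 := by omega
        subst hml'
        have hr := hatP_rec n (n+1) y
        have hz := hatP_high n (n+1) (by omega) y
        have H1 := helper1 (n+1) (n+1) le_rfl
        rw [if_neg hml]
        unfold checkP
        rw [show n+1+1 = n+2 from rfl]
        simp only [show n+1-(n+1) = 0 by omega, show n-n = 0 by omega,
          show n+1+1-(n+1) = 1 by omega, show n+1-n = 1 by omega,
          show n+1+(n+1) = 2*n+2 by omega, show n+1+1+(n+1) = 2*n+3 by omega,
          show n+2+(n+1) = 2*n+3 by omega, show n+1+n+1 = 2*n+2 by omega,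
          show n+2-(n+1) = 1 by omega] at H1 ⊢
        push_cast at H1 hr ⊢
        linear_combination
          Real.sqrt ((Nat.factorial 0 : ℝ)/(Nat.factorial (2*n+2) : ℝ)) * hr
          - hatP (n+2) (n+1) y * H1
          + ((2*(n:ℝ)+2)
              * Real.sqrt ((Nat.factorial 0 : ℝ)/(Nat.factorial (2*n+2) : ℝ))) * hz

lemma hC_abs (a b : ℤ) : hC a b = hC a (b.natAbs : ℤ) := by
  unfold hC
  congr 1
  have h : (a+b)*(a-b) = (a+(b.natAbs:ℤ))*(a-(b.natAbs:ℤ)) := by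
    linear_combination Int.natAbs_sq b
  exact_mod_cast congrArg (fun z : ℤ => (z:ℝ)) h

theorem stmt16 (l : ℕ) (m : ℤ) (hm : |m| ≤ (l : ℤ)) :
    ∀ y ∈ Set.Ioo (-1 : ℝ) 1, ∀ φ : ℝ,
      y * Ysh l m y φ
        = (1 / (2 * (l : ℝ) + 1)) *
            (hC ((l : ℤ) + 1) m * Ysh ((l : ℤ) + 1) m y φ
              + hC l m * Ysh ((l : ℤ) - 1) m y φ) := by
  intro y _ φ
  have habs : (m.natAbs : ℤ) = |m| := (Int.abs_eq_natAbs m).symm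
  set M := m.natAbs with hMdef
  have hMl : M ≤ l := by omega
  set T := (if m < 0 then Real.sqrt 2 * Real.sin ((M:ℝ)*φ)
      else if m = 0 then (1:ℝ) else Real.sqrt 2 * Real.cos ((m:ℝ)*φ)) with hT
  have Yeq : ∀ k : ℤ, 0 ≤ k → |m| ≤ k → Ysh k m y φ = T * checkP k.toNat M y := by
    intro k hk hmk
    unfold Ysh
    rw [if_pos ⟨hk, hmk⟩, hT]
    split_ifs with h1 h2
    · ring
    · subst h2; simp [hMdef]
    · ring
  have hY1 : Ysh (l:ℤ) m y φ = T * checkP l M y := by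
    rw [Yeq (l:ℤ) (by positivity) hm, Int.toNat_natCast]
  have hY2 : Ysh ((l:ℤ)+1) m y φ = T * checkP (l+1) M y := by
    rw [show ((l:ℤ)+1) = ((l+1:ℕ):ℤ) by push_cast; ring,
      Yeq ((l+1:ℕ):ℤ) (by positivity) (by omega), Int.toNat_natCast]
  have hY3 : hC (l:ℤ) m * Ysh ((l:ℤ)-1) m y φ
      = hC (l:ℤ) (M:ℤ) * (T * (if M < l then checkP (l-1) M y else 0)) := by
    by_cases hc : M < l
    · rw [if_pos hc, hC_abs (l:ℤ) m,
        show ((l:ℤ)-1) = ((l-1:ℕ):ℤ) by omega,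
        Yeq ((l-1:ℕ):ℤ) (by positivity) (by omega), Int.toNat_natCast]
    · have hneg : ¬ (0 ≤ (l:ℤ)-1 ∧ |m| ≤ (l:ℤ)-1) := by
        push_neg
        intro _
        omega
      rw [if_neg hc]
      unfold Ysh
      rw [if_neg hneg]
      simp
  rw [hY1, hY2, hY3, hC_abs ((l:ℤ)+1) m]
  have hrec := checkP_rec l M hMl y
  have h2l : (2*(l:ℝ)+1) ≠ 0 := by positivity
  rw [one_div, inv_mul_eq_div, eq_div_iff h2l]
  linear_combination T * hrec
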